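/- For every function φ in the Sobolev space H¹(Ω₁) with Ω₁ = [0,1]^{d-1} × [0,L], one has (2/L)‖Γφ‖²_{L²(S)} + ‖∇φ‖²_{L²(Ω₁)} ≥ (1/L²)‖φ‖²_{L²(Ω₁)}, where Γ is the trace operator onto the face S = [0,1]^{d-1} × {0}. -/

import Mathlib

open MeasureTheory Set

set_option maxHeartbeats 1000000

lemma oneD_trace (L : ℝ) (hL : 0 < L) (f : ℝ → ℝ) (hf : ContDiff ℝ 1 f) :
    (1 / L ^ 2) * ∫ t in (0:ℝ)..L, f t ^ 2
      ≤ (2 / L) * f 0 ^ 2 + ∫ t in (0:ℝ)..L, (deriv f t) ^ 2 := by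
  have hL0 : L ≠ 0 := hL.ne'
  set W : ℝ → ℝ := fun t => 2 * (t / L - 1) / (2 - (t / L - 1) ^ 2) with hW
  set W' : ℝ → ℝ := fun t => 2 * (2 + (t / L - 1) ^ 2) / (L * (2 - (t / L - 1) ^ 2) ^ 2) with hW'
  have huIcc : Set.uIcc (0:ℝ) L = Set.Icc 0 L := Set.uIcc_of_le hL.le
  -- denominator bounds on [0, L]
  have hub : ∀ t ∈ Set.Icc (0:ℝ) L, (t / L - 1) ^ 2 ≤ 1 := by
    intro t ht
    have h1 : 0 ≤ t / L := div_nonneg ht.1 hL.le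
    have h2 : t / L ≤ 1 := (div_le_one hL).2 ht.2
    nlinarith
  have hden : ∀ t ∈ Set.Icc (0:ℝ) L, (0:ℝ) < 2 - (t / L - 1) ^ 2 := by
    intro t ht; have := hub t ht; linarith
  -- derivative of f
  have hf' : ∀ t, HasDerivAt f (deriv f t) t := fun t =>
    ((hf.differentiable one_ne_zero) t).hasDerivAt
  have hfc : Continuous f := hf.continuous
  have hfc' : Continuous (deriv f) := hf.continuous_deriv le_rfl
  -- derivative of W
  have hu : ∀ t : ℝ, HasDerivAt (fun s => s / L - 1) (1 / L) t := by
    intro t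
    simpa using ((hasDerivAt_id t).div_const L).sub_const 1
  have hWd : ∀ t ∈ Set.Icc (0:ℝ) L, HasDerivAt W (W' t) t := by
    intro t ht
    have hne : (2 - (t / L - 1) ^ 2) ≠ 0 := (hden t ht).ne'
    have hnum : HasDerivAt (fun s => 2 * (s / L - 1)) (2 * (1 / L)) t := (hu t).const_mul 2
    have hd2 : HasDerivAt (fun s => 2 - (s / L - 1) ^ 2)
        (-(((2:ℕ) : ℝ) * (t / L - 1) ^ (2 - 1) * (1 / L))) t := by
      simpa using (((hu t).pow 2).const_sub 2)
    have hres := hnum.div hd2 hne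
    have heq : (2 * (1 / L) * (2 - (t / L - 1) ^ 2)
        - 2 * (t / L - 1) * -(((2:ℕ):ℝ) * (t / L - 1) ^ (2 - 1) * (1 / L))) / (2 - (t / L - 1) ^ 2) ^ 2
        = W' t := by
      simp only [hW']
      push_cast
      rw [div_eq_div_iff (by positivity) (by positivity)]
      field_simp [hL0]
      ring
    rw [heq] at hres
    exact hres
  -- the auxiliary function H and its derivative
  set H : ℝ → ℝ := fun t => W t * f t ^ 2 / L with hH
  set H' : ℝ → ℝ := fun t => (W' t * f t ^ 2 + W t * (2 * f t * deriv f t)) / L with hH'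
  have hHd : ∀ t ∈ Set.Icc (0:ℝ) L, HasDerivAt H (H' t) t := by
    intro t ht
    have h2 : HasDerivAt (fun s => f s ^ 2) (2 * f t * deriv f t) t := by
      simpa [mul_comm, mul_assoc] using ((hf' t).fun_pow 2)
    exact ((hWd t ht).mul h2).div_const L
  -- continuity facts
  have hcu : Continuous fun t : ℝ => t / L - 1 := by continuity
  have hWc : ContinuousOn W (Set.Icc (0:ℝ) L) := by
    apply ContinuousOn.div (continuous_const.mul hcu).continuousOn
      (continuous_const.sub (hcu.pow 2)).continuousOn
    intro t ht; exact (hden t ht).ne'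
  have hW'c : ContinuousOn W' (Set.Icc (0:ℝ) L) := by
    apply ContinuousOn.div (continuous_const.mul (continuous_const.add (hcu.pow 2))).continuousOn
      (continuous_const.mul ((continuous_const.sub (hcu.pow 2)).pow 2)).continuousOn
    intro t ht
    have := hden t ht
    exact mul_ne_zero hL0 (pow_ne_zero _ this.ne')
  have hH'c : ContinuousOn H' (Set.Icc (0:ℝ) L) :=
    ((hW'c.mul (hfc.pow 2).continuousOn).add
      (hWc.mul ((continuous_const.mul hfc).mul hfc').continuousOn)).div_const L
  have intH' : IntervalIntegrable H' volume 0 L := by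
    rw [intervalIntegrable_iff_integrableOn_Icc_of_le hL.le]
    exact hH'c.integrableOn_compact isCompact_Icc
  have intd2 : IntervalIntegrable (fun t => (deriv f t) ^ 2) volume 0 L :=
    (hfc'.pow 2).intervalIntegrable 0 L
  have intf2 : IntervalIntegrable (fun t => f t ^ 2 / L ^ 2) volume 0 L :=
    ((hfc.pow 2).div_const _).intervalIntegrable 0 L
  -- pointwise inequality
  have hpt : ∀ t ∈ Set.Icc (0:ℝ) L, 0 ≤ (deriv f t) ^ 2 + H' t - f t ^ 2 / L ^ 2 := by
    intro t ht
    set u := t / L - 1 with hu'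
    set a := deriv f t
    set b := f t
    have hu2 : u ^ 2 ≤ 1 := hub t ht
    have hD : (0:ℝ) < 2 - u ^ 2 := hden t ht
    have key : (a) ^ 2 + (2 * (2 + u ^ 2) / (L * (2 - u ^ 2) ^ 2) * b ^ 2
          + 2 * u / (2 - u ^ 2) * (2 * b * a)) / L - b ^ 2 / L ^ 2
        = ((L * (2 - u ^ 2) * a + 2 * u * b) ^ 2 + b ^ 2 * (u ^ 2 * (2 - u ^ 2)))
          / (L * (2 - u ^ 2)) ^ 2 := by
      have hDne : (2 - u ^ 2) ≠ 0 := hD.ne'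
      field_simp
      ring
    simp only [hH', hW', hW]
    rw [key]
    apply div_nonneg _ (by positivity)
    have h1 := sq_nonneg (L * (2 - u ^ 2) * a + 2 * u * b)
    nlinarith [sq_nonneg b, sq_nonneg u, sq_nonneg (b*u)]
  -- integrate
  have hnn : 0 ≤ ∫ t in (0:ℝ)..L, ((deriv f t) ^ 2 + H' t - f t ^ 2 / L ^ 2) := by
    apply intervalIntegral.integral_nonneg hL.le
    intro t ht; exact hpt t ht
  have hsplit : ∫ t in (0:ℝ)..L, ((deriv f t) ^ 2 + H' t - f t ^ 2 / L ^ 2)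
      = (∫ t in (0:ℝ)..L, (deriv f t) ^ 2) + (∫ t in (0:ℝ)..L, H' t)
        - ∫ t in (0:ℝ)..L, f t ^ 2 / L ^ 2 := by
    rw [intervalIntegral.integral_sub (intd2.add intH') intf2,
      intervalIntegral.integral_add intd2 intH']
  have hFTC : ∫ t in (0:ℝ)..L, H' t = 2 * f 0 ^ 2 / L := by
    rw [intervalIntegral.integral_eq_sub_of_hasDerivAt (fun t ht => hHd t (huIcc ▸ ht)) intH']
    have hWL : W L = 0 := by simp [hW, div_self hL0]
    have hW0 : W 0 = -2 := by norm_num [hW]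
    simp only [hH, hWL, hW0]
    ring
  have hdiv : ∫ t in (0:ℝ)..L, f t ^ 2 / L ^ 2 = (∫ t in (0:ℝ)..L, f t ^ 2) / L ^ 2 :=
    intervalIntegral.integral_div _ _
  have e1 : (1 / L ^ 2) * ∫ t in (0:ℝ)..L, f t ^ 2 = (∫ t in (0:ℝ)..L, f t ^ 2) / L ^ 2 := by
    ring
  have e2 : (2 / L) * f 0 ^ 2 = 2 * f 0 ^ 2 / L := by ring
  rw [e1, e2]
  rw [hsplit, hFTC, hdiv] at hnn
  linarith



/-- Squared Euclidean norm of the full gradient of `φ : ℝ^{d-1} × ℝ → ℝ`. -/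
noncomputable def gradSq {n : ℕ} (φ : (Fin n → ℝ) × ℝ → ℝ) (p : (Fin n → ℝ) × ℝ) : ℝ :=
  (∑ i : Fin n, (fderiv ℝ φ p (Pi.single i 1, 0)) ^ 2) + (fderiv ℝ φ p (0, 1)) ^ 2

/-- Trace–Poincaré inequality on the strip `Ω₁ = [0,1]^{d-1} × [0,L]`:
`(2/L)‖Γφ‖²_{L²(S)} + ‖∇φ‖²_{L²(Ω₁)} ≥ (1/L²)‖φ‖²_{L²(Ω₁)}`. -/
theorem trace_poincare_strip {n : ℕ} (L : ℝ) (hL : 0 < L)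
    (φ : (Fin n → ℝ) × ℝ → ℝ) (hφ : ContDiff ℝ 1 φ) :
    (1 / L ^ 2) * (∫ x' in Set.Icc (0 : Fin n → ℝ) 1, ∫ t in (0 : ℝ)..L, (φ (x', t)) ^ 2)
      ≤ (2 / L) * (∫ x' in Set.Icc (0 : Fin n → ℝ) 1, (φ (x', 0)) ^ 2)
        + ∫ x' in Set.Icc (0 : Fin n → ℝ) 1, ∫ t in (0 : ℝ)..L, gradSq φ (x', t) := by
  have hφc : Continuous φ := hφ.continuous
  have hcf : Continuous (fderiv ℝ φ) := hφ.continuous_fderiv one_ne_zero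
  have hgc : Continuous (gradSq φ) := by
    unfold gradSq
    apply Continuous.add
    · exact continuous_finset_sum _ fun i _ => (hcf.clm_apply continuous_const).pow 2
    · exact (hcf.clm_apply continuous_const).pow 2
  -- fiber derivative
  have hfib : ∀ (x' : Fin n → ℝ) (t : ℝ),
      HasDerivAt (fun s => φ (x', s)) (fderiv ℝ φ (x', t) (0, 1)) t := by
    intro x' t
    have h1 : HasDerivAt (fun s : ℝ => ((x', s) : (Fin n → ℝ) × ℝ))
        ((0 : Fin n → ℝ), (1 : ℝ)) t := (hasDerivAt_const t x').prodMk (hasDerivAt_id t)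
    exact ((hφ.differentiable one_ne_zero (x', t)).hasFDerivAt).comp_hasDerivAt t h1
  have hfibcd : ∀ x' : Fin n → ℝ, ContDiff ℝ 1 (fun s : ℝ => φ (x', s)) := fun x' =>
    hφ.comp (contDiff_const.prodMk contDiff_id)
  -- fiberwise inequality
  have hfiber : ∀ x' : Fin n → ℝ,
      (1 / L ^ 2) * ∫ t in (0:ℝ)..L, (φ (x', t)) ^ 2
        ≤ (2 / L) * (φ (x', 0)) ^ 2 + ∫ t in (0:ℝ)..L, gradSq φ (x', t) := by
    intro x'
    have h1 := oneD_trace L hL (fun s => φ (x', s)) (hfibcd x')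
    have hde : ∀ t, deriv (fun s => φ (x', s)) t = fderiv ℝ φ (x', t) (0, 1) := fun t =>
      (hfib x' t).deriv
    have h2 : (∫ t in (0:ℝ)..L, (deriv (fun s => φ (x', s)) t) ^ 2)
        ≤ ∫ t in (0:ℝ)..L, gradSq φ (x', t) := by
      apply intervalIntegral.integral_mono_on hL.le
      · exact (((hφ.comp (contDiff_const.prodMk contDiff_id) :
          ContDiff ℝ 1 (fun s : ℝ => φ (x', s))).continuous_deriv le_rfl).pow 2).intervalIntegrable 0 L
      · exact (hgc.comp (continuous_const.prodMk continuous_id)).intervalIntegrable 0 L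
      · intro t ht
        rw [hde t]
        unfold gradSq
        have : (0:ℝ) ≤ ∑ i : Fin n, (fderiv ℝ φ (x', t) (Pi.single i 1, 0)) ^ 2 :=
          Finset.sum_nonneg fun i _ => sq_nonneg _
        linarith
    linarith
  -- integrability over the cube
  have hcube : IsCompact (Set.Icc (0 : Fin n → ℝ) 1) := isCompact_Icc
  have hmeas : MeasurableSet (Set.Icc (0 : Fin n → ℝ) 1) := measurableSet_Icc
  have hA : IntegrableOn (fun x' => ∫ t in (0:ℝ)..L, (φ (x', t)) ^ 2)
      (Set.Icc (0 : Fin n → ℝ) 1) volume := by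
    apply Continuous.integrableOn_Icc
    exact intervalIntegral.continuous_parametric_intervalIntegral_of_continuous'
      (f := fun x' t => (φ (x', t)) ^ 2) (by fun_prop) 0 L
  have hB : IntegrableOn (fun x' => (φ (x', 0)) ^ 2) (Set.Icc (0 : Fin n → ℝ) 1) volume := by
    apply Continuous.integrableOn_Icc
    fun_prop
  have hC : IntegrableOn (fun x' => ∫ t in (0:ℝ)..L, gradSq φ (x', t))
      (Set.Icc (0 : Fin n → ℝ) 1) volume := by
    apply Continuous.integrableOn_Icc
    exact intervalIntegral.continuous_parametric_intervalIntegral_of_continuous'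
      (f := fun x' t => gradSq φ (x', t)) (by fun_prop) 0 L
  have hmono : ∫ x' in Set.Icc (0 : Fin n → ℝ) 1,
      (1 / L ^ 2) * ∫ t in (0:ℝ)..L, (φ (x', t)) ^ 2
      ≤ ∫ x' in Set.Icc (0 : Fin n → ℝ) 1,
        ((2 / L) * (φ (x', 0)) ^ 2 + ∫ t in (0:ℝ)..L, gradSq φ (x', t)) := by
    apply setIntegral_mono_on (hA.const_mul _) ((hB.const_mul _).add hC) hmeas
    intro x' _
    exact hfiber x'
  rw [integral_add (hB.const_mul _) hC, integral_const_mul, integral_const_mul] at hmono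
  exact hmono
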